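/- Let G be a Hausdorff topological group, let 𝒢 ⊂ G be a subset, and let 𝒰 ⊂ G be a nonempty open set with compact closure such that cl(𝒰) ⊂ 𝒢^{−1}𝒰. Then for every nonempty subset 𝒵 ⊂ G with compact closure, cl(𝒰𝒵) ⊂ 𝒢^{−1}𝒰𝒵. -/

import Mathlib

open Filter Topology Matrix Pointwise

namespace Paper

variable {𝒜 : Type*} [Fintype 𝒜] [DecidableEq 𝒜]

/-- The space of bi-infinite sequences over the alphabet `𝒜`. -/
abbrev Seq (𝒜 : Type*) := ℤ → 𝒜

/-- The left shift map. -/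
def shift (x : Seq 𝒜) : Seq 𝒜 := fun i => x (i + 1)

/-- The inverse of the left shift map. -/
def shiftInv (x : Seq 𝒜) : Seq 𝒜 := fun i => x (i - 1)

/-- `n`-th power of the shift, `n : ℤ`. -/
def shiftZ (n : ℤ) (x : Seq 𝒜) : Seq 𝒜 := fun i => x (i + n)

/-- The subshift of finite type with transition rule `H`. -/
def SFT (H : 𝒜 → 𝒜 → Prop) : Set (Seq 𝒜) := {x | ∀ i : ℤ, H (x i) (x (i + 1))}

open Classical in
/-- dist(x,y) = 2^{-n}, n = min{|i| : x i ≠ y i}. -/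
noncomputable def seqDist (x y : Seq 𝒜) : ℝ :=
  if x = y then 0
  else (2 : ℝ) ^ (-((sInf {n : ℕ | ∃ i : ℤ, i.natAbs = n ∧ x i ≠ y i} : ℕ) : ℤ))

/-- Transitivity: some point has dense forward orbit in `Σ_H`. -/
def IsTransitive (H : 𝒜 → 𝒜 → Prop) : Prop :=
  ∃ x ∈ SFT H, ∀ y ∈ SFT H, ∀ ε : ℝ, 0 < ε → ∃ n : ℕ, seqDist (shift^[n] x) y < ε

/-- The number of words of length `n` appearing in sequences of `X`. -/
noncomputable def wordCount (X : Set (Seq 𝒜)) (n : ℕ) : ℕ :=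
  Nat.card {w : Fin n → 𝒜 // ∃ x ∈ X, ∃ k : ℤ, ∀ i : Fin n, x (k + (i : ℤ)) = w i}

/-- Topological entropy of the shift restricted to `X`, via word counting. -/
noncomputable def entropy (X : Set (Seq 𝒜)) : ℝ :=
  Filter.atTop.limsup fun n : ℕ => Real.log (wordCount X n : ℝ) / (n : ℝ)

/-- The Euclidean norm on `ℝ^d`. -/
noncomputable def eNorm {d : ℕ} (u : Fin d → ℝ) : ℝ := Real.sqrt (∑ i, (u i) ^ 2)

/-- The operator norm of a matrix, induced by the Euclidean norm. -/
noncomputable def opNorm {d : ℕ} (M : Matrix (Fin d) (Fin d) ℝ) : ℝ :=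
  sSup {r : ℝ | ∃ u : Fin d → ℝ, eNorm u = 1 ∧ r = eNorm (M.mulVec u)}

/-- Forward iterates of a cocycle over the shift: `A_0 = 1`, `A_{n+1}(x) = A_n(σ x) * A x`. -/
def iterN {M : Type*} [Monoid M] (A : Seq 𝒜 → M) : ℕ → Seq 𝒜 → M
  | 0, _ => 1
  | n + 1, x => iterN A n (shift x) * A x

/-- Iterates of a cocycle over the shift, indexed by `ℤ`. -/
noncomputable def iterZ {Gr : Type*} [Group Gr] (A : Seq 𝒜 → Gr) (n : ℤ) (x : Seq 𝒜) : Gr :=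
  if 0 ≤ n then iterN A n.toNat x
  else (iterN A (-n).toNat (shiftInv^[(-n).toNat] x))⁻¹

variable {d : ℕ}

/-- Underlying matrix of an element of `GL(d,ℝ)`. -/
def glMat (g : GL (Fin d) ℝ) : Matrix (Fin d) (Fin d) ℝ := g.val

/-- `B(A,κ)`: points of `Σ_H` whose full orbit is fiberwise bounded by `κ`. -/
noncomputable def BSet (H : 𝒜 → 𝒜 → Prop) (A : Seq 𝒜 → GL (Fin d) ℝ) (κ : ℝ) :
    Set (Seq 𝒜) :=
  {x ∈ SFT H | ∀ n : ℤ, opNorm (glMat (iterZ A n x)) ≤ κ ∧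
    opNorm (glMat (iterZ A n x)⁻¹) ≤ κ}

/-- The `C⁰` distance between two cocycles over `Σ_H`. -/
noncomputable def dC0 (H : 𝒜 → 𝒜 → Prop) (A B : Seq 𝒜 → GL (Fin d) ℝ) : ℝ :=
  sSup {r : ℝ | ∃ x ∈ SFT H, r = opNorm (glMat (A x) - glMat (B x))}

/-- The `C^α` Hölder seminorm of a matrix-valued map on `Σ_H`. -/
noncomputable def holderSemi (H : 𝒜 → 𝒜 → Prop) (f : Seq 𝒜 → Matrix (Fin d) (Fin d) ℝ)
    (α : ℝ) : ℝ :=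
  sSup {r : ℝ | ∃ x ∈ SFT H, ∃ y ∈ SFT H, x ≠ y ∧ r = opNorm (f x - f y) / seqDist x y ^ α}

/-- A cocycle is `α`-Hölder if its `C^α` seminorm is finite. -/
def IsHolder (H : 𝒜 → 𝒜 → Prop) (A : Seq 𝒜 → GL (Fin d) ℝ) (α : ℝ) : Prop :=
  ∃ C : ℝ, ∀ x ∈ SFT H, ∀ y ∈ SFT H,
    opNorm (glMat (A x) - glMat (A y)) ≤ C * seqDist x y ^ α

/-- The `C^α` distance between two cocycles over `Σ_H`. -/
noncomputable def dCalpha (H : 𝒜 → 𝒜 → Prop) (A B : Seq 𝒜 → GL (Fin d) ℝ) (α : ℝ) : ℝ :=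
  dC0 H A B + holderSemi H (fun x => glMat (A x) - glMat (B x)) α

/-- Continuity (with respect to `seqDist`) of a matrix-valued map on `Σ_H`. -/
def MatContinuousOn (H : 𝒜 → 𝒜 → Prop) (f : Seq 𝒜 → Matrix (Fin d) (Fin d) ℝ) : Prop :=
  ∀ x ∈ SFT H, ∀ ε : ℝ, 0 < ε → ∃ δ : ℝ, 0 < δ ∧
    ∀ y ∈ SFT H, seqDist x y < δ → opNorm (f x - f y) < ε

/-- `(σ, A)` is continuously conjugate to an isometric cocycle. -/
def ConjIsometric (H : 𝒜 → 𝒜 → Prop) (A : Seq 𝒜 → GL (Fin d) ℝ) : Prop :=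
  ∃ P : Seq 𝒜 → GL (Fin d) ℝ, MatContinuousOn H (fun x => glMat (P x)) ∧
    ∀ x ∈ SFT H, glMat ((P (shift x))⁻¹ * A x * P x) ∈ Matrix.orthogonalGroup (Fin d) ℝ

/-- `(σ, A)` admits a dominated splitting: a continuous invariant splitting
`ℝ^d = E₁ ⊕ E₂` (encoded by a continuous field of nontrivial idempotents `π` with
`E₁ = range π`, `E₂ = ker π`) with uniformly separated growth rates. -/
def HasDominatedSplitting (H : 𝒜 → 𝒜 → Prop) (A : Seq 𝒜 → GL (Fin d) ℝ) : Prop :=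
  ∃ π : Seq 𝒜 → Matrix (Fin d) (Fin d) ℝ,
    MatContinuousOn H π ∧
    (∀ x ∈ SFT H, π x * π x = π x ∧ π x ≠ 0 ∧ π x ≠ 1) ∧
    (∀ x ∈ SFT H, glMat (A x) * π x = π (shift x) * glMat (A x)) ∧
    ∃ C : ℝ, 0 < C ∧ ∃ lam : ℝ, 0 < lam ∧ lam < 1 ∧
      ∀ x ∈ SFT H, ∀ n : ℕ, 1 ≤ n →
        ∀ u ∈ LinearMap.range (π x).mulVecLin, ∀ v ∈ LinearMap.ker (π x).mulVecLin,
          eNorm ((glMat (iterN A n x)).mulVec u) * eNorm v ≤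
            C * lam ^ n * (eNorm u * eNorm ((glMat (iterN A n x)).mulVec v))

/-- `H`-admissible finite words. -/
def Adm (H : 𝒜 → 𝒜 → Prop) (w : List 𝒜) : Prop := w.Chain' H

/-- The word `(x_{-k}, …, x_k)` read in the sequence `x`. -/
def window (k : ℕ) (x : Seq 𝒜) : List 𝒜 :=
  (List.range (2 * k + 1)).map fun i => x ((i : ℤ) - (k : ℤ))

/-- `w` is a transition from `a` to `b`: an admissible word with prefix `a` and suffix `b`. -/
def IsTransition (H : 𝒜 → 𝒜 → Prop) (a b w : List 𝒜) : Prop :=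
  Adm H w ∧ a <+: w ∧ b <:+ w

/-- The product `A_[w⟩ = φ(w⁽ⁿ⁻²ᵏ⁾) ⋯ φ(w⁽¹⁾)` of a locally constant cocycle
represented by `φ` along the walk `w`. -/
def transProd {M : Type*} [Monoid M] (φ : List 𝒜 → M) (k : ℕ) (w : List 𝒜) : M :=
  (((List.range (w.length - 2 * k)).map fun i => φ ((w.drop i).take (2 * k + 1))).reverse).prod

section SubgroupCocycle

variable {G : Subgroup (GL (Fin d) ℝ)}

/-- Underlying matrix of an element of the subgroup `G ⊂ GL(d,ℝ)`. -/
def subMat (g : ↥G) : Matrix (Fin d) (Fin d) ℝ := ((g : GL (Fin d) ℝ) : Matrix (Fin d) (Fin d) ℝ)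

/-- `B(A,κ)` for `G`-valued cocycles. -/
noncomputable def BSetSub (H : 𝒜 → 𝒜 → Prop) (A : Seq 𝒜 → ↥G) (κ : ℝ) : Set (Seq 𝒜) :=
  {x ∈ SFT H | ∀ n : ℤ, opNorm (subMat (iterZ A n x)) ≤ κ ∧
    opNorm (subMat (iterZ A n x)⁻¹) ≤ κ}

/-- `C⁰` distance for `G`-valued cocycles. -/
noncomputable def dC0Sub (H : 𝒜 → 𝒜 → Prop) (A B : Seq 𝒜 → ↥G) : ℝ :=
  sSup {r : ℝ | ∃ x ∈ SFT H, r = opNorm (subMat (A x) - subMat (B x))}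

/-- `α`-Hölder condition for `G`-valued cocycles. -/
def IsHolderSub (H : 𝒜 → 𝒜 → Prop) (A : Seq 𝒜 → ↥G) (α : ℝ) : Prop :=
  ∃ C : ℝ, ∀ x ∈ SFT H, ∀ y ∈ SFT H,
    opNorm (subMat (A x) - subMat (A y)) ≤ C * seqDist x y ^ α

/-- `C^α` distance for `G`-valued cocycles. -/
noncomputable def dCalphaSub (H : 𝒜 → 𝒜 → Prop) (A B : Seq 𝒜 → ↥G) (α : ℝ) : ℝ :=
  dC0Sub H A B + holderSemi H (fun x => subMat (A x) - subMat (B x)) α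

/-- The covering condition for a locally constant `G`-cocycle represented by `φ`
(depending on positions in `⟦-k, k⟧`). -/
def CoveringCond (H : 𝒜 → 𝒜 → Prop) (φ : List 𝒜 → ↥G) (k : ℕ) : Prop :=
  ∃ U : Set ↥G, U.Nonempty ∧ IsOpen U ∧ IsCompact (closure U) ∧
    ∃ A' : Set (List 𝒜), A'.Nonempty ∧ (∀ a ∈ A', Adm H a ∧ a.length = 2 * k + 1) ∧
      ∀ a ∈ A', closure U ⊆
        ⋃ b ∈ A', ⋃ w ∈ {w : List 𝒜 | IsTransition H a b w}, (fun u => (transProd φ k w)⁻¹ * u) '' U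

/-- `w₁` is a proper prefix of `w₂`. -/
def ProperPrefix (w₁ w₂ : List 𝒜) : Prop := w₁ <+: w₂ ∧ w₁ ≠ w₂

/-- The multiple covering condition of `m` layers for a locally constant `G`-cocycle
represented by `φ` (depending on positions in `⟦-k, k⟧`). -/
def MultiCoveringCond (H : 𝒜 → 𝒜 → Prop) (φ : List 𝒜 → ↥G) (k : ℕ) (m : ℕ) : Prop :=
  ∃ n : ℕ, 0 < n ∧ ∃ U : Fin n → Set ↥G,
    (∀ ι, (U ι).Nonempty ∧ IsOpen (U ι) ∧ IsCompact (closure (U ι))) ∧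
    ∃ A' : Set (List 𝒜), A'.Nonempty ∧ (∀ a ∈ A', Adm H a ∧ a.length = 2 * k + 1) ∧
      ∃ Λ : List 𝒜 → Fin n → Fin m → Set (List 𝒜),
        (∀ a ∈ A', ∀ ι jj, (Λ a ι jj).Nonempty ∧
          Λ a ι jj ⊆ {w : List 𝒜 | ∃ b ∈ A', IsTransition H a b w}) ∧
        (∀ a ∈ A', ∀ ι : Fin n, ∀ j₁ j₂ : Fin m, ∀ w₁ ∈ Λ a ι j₁, ∀ w₂ ∈ Λ a ι j₂,
          ¬ ProperPrefix w₁ w₂) ∧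
        (∀ a ∈ A', ∀ ι jj, closure (U ι) ⊆
          ⋃ w ∈ Λ a ι jj, (fun u => (transProd φ k w)⁻¹ * u) '' (⋃ ι', U ι'))

/-- The ball of radius `r` around the identity in `G`. -/
noncomputable def GBall (G : Subgroup (GL (Fin d) ℝ)) (r : ℝ) : Set ↥G :=
  {g : ↥G | opNorm (subMat g - 1) < r}

end SubgroupCocycle

/-- `P_[w] = g_k ⋯ g_1` for `w = (g_1, …, g_k)`. -/
def prodMap {M : Type*} [Monoid M] {k : ℕ} (w : Fin k → M) : M :=
  ((List.ofFn w).reverse).prod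

/-- The local unstable set of `y` in `Σ_H`. -/
def WuLoc (H : 𝒜 → 𝒜 → Prop) (y : Seq 𝒜) : Set (Seq 𝒜) :=
  {z ∈ SFT H | ∀ i : ℤ, i ≤ 0 → z i = y i}


/-- Remark 3.2. In a Hausdorff topological group, if an open set `𝒰`
with compact closure satisfies `cl(𝒰) ⊆ 𝒢⁻¹𝒰`, then for every nonempty `𝒵` with compact
closure, `cl(𝒰𝒵) ⊆ 𝒢⁻¹𝒰𝒵`. -/
theorem statement9 {G : Type*} [Group G] [TopologicalSpace G] [IsTopologicalGroup G]
    [T2Space G] (𝒢 : Set G) (𝒰 : Set G) (h𝒰ne : 𝒰.Nonempty) (h𝒰open : IsOpen 𝒰)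
    (h𝒰cpt : IsCompact (closure 𝒰)) (hcov : closure 𝒰 ⊆ 𝒢⁻¹ * 𝒰)
    (𝒵 : Set G) (h𝒵ne : 𝒵.Nonempty) (h𝒵cpt : IsCompact (closure 𝒵)) :
    closure (𝒰 * 𝒵) ⊆ 𝒢⁻¹ * 𝒰 * 𝒵 := by
  have hsub : closure (𝒰 * 𝒵) ⊆ closure 𝒰 * closure 𝒵 := by
    apply closure_minimal (Set.mul_subset_mul subset_closure subset_closure)
    exact (h𝒰cpt.mul h𝒵cpt).isClosed
  intro x hx
  obtain ⟨u, hu, z', hz', rfl⟩ := hsub hx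
  obtain ⟨g, hg, v, hv, rfl⟩ := hcov hu
  have hcont : Continuous fun w : G => v * z' * w⁻¹ := by continuity
  have hnh : {w : G | v * z' * w⁻¹ ∈ 𝒰} ∈ 𝓝 z' := by
    have := hcont.continuousAt (x := z')
    apply this.preimage_mem_nhds
    simpa using h𝒰open.mem_nhds (by simpa using hv)
  obtain ⟨z, hzW, hz𝒵⟩ := mem_closure_iff_nhds.mp hz' _ hnh
  refine ⟨g * (v * z' * z⁻¹), ⟨g, hg, v * z' * z⁻¹, hzW, rfl⟩, z, hz𝒵, by group⟩

end Paper
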